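/- arXiv:1909.01306 — 3 statements merged into one kernel-verified Lean document; each statement's English description precedes it below -/
import Mathlib

section
/- Let n ≥ 3 be an odd integer. Then V(2,n) = (3n−3)/4 if n ≡ 1 (mod 4), and V(2,n) = (3n−5)/4 if n ≡ 3 (mod 4); moreover V((n+1)/2, n) = V(2,n). -/
/-- `(x, y) ∈ ℤ²` lies in the interior of the lattice parallelogram
`P_{a,n} = {t₁·(1,0) + t₂·(a,n) : 0 ≤ t₁, t₂ ≤ 1}`. -/
def inInteriorP (a n : ℤ) (p : ℤ × ℤ) : Prop :=
  ∃ t₁ t₂ : ℝ, 0 < t₁ ∧ t₁ < 1 ∧ 0 < t₂ ∧ t₂ < 1 ∧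
    (p.1 : ℝ) = t₁ + t₂ * (a : ℝ) ∧ (p.2 : ℝ) = t₂ * (n : ℝ)

/-- A lattice point `(x, y) ∈ ℤ²` is visible (from the origin) if `gcd(x, y) = 1`. -/
def VisiblePt (p : ℤ × ℤ) : Prop := Int.gcd p.1 p.2 = 1

/-- `V a n` is the number of visible lattice points in the interior of `P_{a,n}`. -/
noncomputable def V (a n : ℤ) : ℕ :=
  {p : ℤ × ℤ | inInteriorP a n p ∧ VisiblePt p}.ncard

/- helper gcd lemmas -/
lemma gcd_add_mul_aux (m n k : ℤ) : Int.gcd m (n + m * k) = Int.gcd m n := by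
  apply Nat.dvd_antisymm
  · rw [← Int.natCast_dvd_natCast]
    exact Int.dvd_coe_gcd (Int.gcd_dvd_left _ _)
      (by have h1 := Int.gcd_dvd_left (a := m) (b := n + m * k)
          have h2 := Int.gcd_dvd_right (a := m) (b := n + m * k)
          have : (Int.gcd m (n + m*k) : ℤ) ∣ (n + m*k) - m*k := dvd_sub h2 (h1.mul_right k)
          simpa using this)
  · rw [← Int.natCast_dvd_natCast]
    exact Int.dvd_coe_gcd (Int.gcd_dvd_left _ _)
      (by have h1 := Int.gcd_dvd_left (a := m) (b := n)
          have h2 := Int.gcd_dvd_right (a := m) (b := n)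
          exact dvd_add h2 (h1.mul_right k))

lemma gcd_two_iff (y : ℤ) : Int.gcd 2 y = 1 ↔ ¬ (2 ∣ y) := by
  constructor
  · intro h h2
    have : (2:ℤ) ∣ (Int.gcd 2 y : ℤ) := Int.dvd_coe_gcd dvd_rfl h2
    rw [h] at this
    norm_num at this
  · intro h
    have hd : (Int.gcd 2 y : ℤ) ∣ 2 := Int.gcd_dvd_left _ _
    have hd2 : Int.gcd 2 y ∣ 2 := by exact_mod_cast hd
    rcases (Nat.dvd_prime Nat.prime_two).mp hd2 with h1 | h1
    · exact h1
    · exact absurd (by have := Int.gcd_dvd_right (a := (2:ℤ)) (b := y)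
                       rw [h1] at this; exact_mod_cast this) h

/- interior characterization -/
lemma interior_char (a n : ℤ) (ha : 0 < a) (han : a < n) (hcop : IsCoprime a n)
    (p : ℤ × ℤ) : inInteriorP a n p ↔ 0 < p.2 ∧ p.2 < n ∧ p.1 = a * p.2 / n + 1 := by
  obtain ⟨x, y⟩ := p
  have hn : (0:ℤ) < n := by omega
  have hnR : (0:ℝ) < (n:ℝ) := by exact_mod_cast hn
  simp only [inInteriorP]
  constructor
  · rintro ⟨t₁, t₂, h1, h2, h3, h4, hx, hy⟩
    have hy0 : (0:ℝ) < (y:ℝ) := by rw [hy]; positivity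
    have hyn : (y:ℝ) < (n:ℝ) := by rw [hy]; nlinarith
    have hy0' : 0 < y := by exact_mod_cast hy0
    have hyn' : y < n := by exact_mod_cast hyn
    refine ⟨hy0', hyn', ?_⟩
    have ht2 : t₂ = (y:ℝ) / n := by
      field_simp at hy ⊢; linarith [hy]
    have ht1 : t₁ = (x:ℝ) - (a:ℝ) * y / n := by
      rw [hx, ht2]; ring
    have hlt : (a:ℝ) * y < x * n := by
      rw [ht1] at h1
      have := (div_lt_iff₀ hnR).mp (by linarith : (a:ℝ) * y / n < x)
      linarith
    have hgt : (x:ℝ) * n < n + (a:ℝ) * y := by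
      rw [ht1] at h2
      have : (x:ℝ) < 1 + (a:ℝ) * y / n := by linarith
      have := (lt_div_iff₀ hnR).mp (by linarith : (x:ℝ) - 1 < (a:ℝ) * y / n)
      linarith
    have hlt' : a * y < x * n := by exact_mod_cast hlt
    have hgt' : x * n < n + a * y := by exact_mod_cast hgt
    have e1 : a * y / n < x := (Int.ediv_lt_iff_lt_mul hn).mpr hlt'
    have e2 : x - 1 ≤ a * y / n := by
      apply (Int.le_ediv_iff_mul_le hn).mpr
      nlinarith
    omega
  · rintro ⟨hy0, hyn, hx⟩
    refine ⟨(x:ℝ) - (a:ℝ) * y / n, (y:ℝ) / n, ?_, ?_, ?_, ?_, by ring, by field_simp⟩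
    · have h5 : a * y < x * n := by
        rw [hx]
        calc a * y < (a * y / n + 1) * n := Int.lt_ediv_add_one_mul_self _ hn
        _ = (a * y / n + 1) * n := rfl
      have h5R : (a:ℝ) * y < (x:ℝ) * n := by exact_mod_cast h5
      have h5d : (a:ℝ) * y / n < x := (div_lt_iff₀ hnR).mpr h5R
      linarith
    · -- need (x-1)*n < a*y, i.e. (a*y/n)*n < a*y, strict since n ∤ a*y
      have hndvd : ¬ (n ∣ a * y) := by
        intro hdvd
        have : n ∣ y := (hcop.symm.dvd_of_dvd_mul_left) hdvd
        have := Int.le_of_dvd hy0 this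
        omega
      have hmod : 0 < a * y % n := by
        have h0 := Int.emod_nonneg (a * y) (by omega : n ≠ 0)
        rcases lt_or_eq_of_le h0 with h | h
        · exact h
        · exact absurd (Int.dvd_of_emod_eq_zero h.symm) hndvd
      have heq : n * (a * y / n) + a * y % n = a * y := Int.mul_ediv_add_emod _ _
      have h6 : (x - 1) * n < a * y := by
        rw [hx]; nlinarith [hmod, heq]
      have h6R : ((x:ℝ) - 1) * n < (a:ℝ) * y := by exact_mod_cast h6
      have h7 : (x:ℝ) - 1 < (a:ℝ) * y / n := (lt_div_iff₀ hnR).mpr h6R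
      linarith
    · positivity
    · rw [div_lt_one hnR]; exact_mod_cast hyn

/- V as a finset card -/
lemma V_eq_card (a n : ℤ) (ha : 0 < a) (han : a < n) (hcop : IsCoprime a n) :
    V a n = ((Finset.Ioo (0:ℤ) n).filter (fun y => Int.gcd (a * y / n + 1) y = 1)).card := by
  have hset : {p : ℤ × ℤ | inInteriorP a n p ∧ VisiblePt p} =
      ↑(((Finset.Ioo (0:ℤ) n).filter (fun y => Int.gcd (a * y / n + 1) y = 1)).image
        (fun y => (a * y / n + 1, y))) := by
    ext ⟨x, y⟩
    simp only [Set.mem_setOf_eq, Finset.coe_image, Set.mem_image, Finset.mem_coe,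
      Finset.mem_filter, Finset.mem_Ioo, interior_char a n ha han hcop, VisiblePt]
    constructor
    · rintro ⟨⟨h1, h2, h3⟩, h4⟩
      exact ⟨y, ⟨⟨h1, h2⟩, by rw [← h3]; exact h4⟩, by rw [← h3]⟩
    · rintro ⟨y', ⟨⟨h1, h2⟩, h3⟩, h4⟩
      obtain ⟨hx', hy'⟩ := Prod.mk.injEq .. ▸ h4
      subst hy'
      exact ⟨⟨h1, h2, hx'.symm⟩, hx' ▸ h3⟩
  rw [V, hset, Set.ncard_coe_finset, Finset.card_image_of_injective]
  intro u v h
  exact (Prod.mk.injEq .. ▸ h).2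

/- ediv computations -/
lemma ediv_two (m y : ℤ) (hm : 1 ≤ m) (h1 : 0 < y) (h2 : y < 2 * m + 1) :
    2 * y / (2 * m + 1) = if y ≤ m then 0 else 1 := by
  split_ifs with h
  · exact Int.ediv_eq_zero_of_lt (by omega) (by omega)
  · have e : 2 * y = (2 * y - (2 * m + 1)) + 1 * (2 * m + 1) := by ring
    rw [e, Int.add_mul_ediv_right _ _ (by omega : (2 * m + 1) ≠ 0),
      Int.ediv_eq_zero_of_lt (by omega) (by omega)]
    norm_num

lemma ediv_half (m y : ℤ) (hm : 1 ≤ m) (h1 : 0 ≤ y) (h2 : y < 2 * m + 1) :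
    (m + 1) * y / (2 * m + 1) = y / 2 := by
  rcases Int.even_or_odd y with ⟨q, hq⟩ | ⟨q, hq⟩
  · have e : (m + 1) * y = q + q * (2 * m + 1) := by rw [hq]; ring
    rw [e, Int.add_mul_ediv_right _ _ (by omega : (2 * m + 1) ≠ 0),
      Int.ediv_eq_zero_of_lt (by omega) (by omega)]
    omega
  · have e : (m + 1) * y = (q + m + 1) + q * (2 * m + 1) := by rw [hq]; ring
    rw [e, Int.add_mul_ediv_right _ _ (by omega : (2 * m + 1) ≠ 0),
      Int.ediv_eq_zero_of_lt (by omega) (by omega)]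
    omega

/- counting lemmas -/
lemma count2 (m : ℤ) (hm : 1 ≤ m) :
    ((Finset.Ioo (0:ℤ) (2 * m + 1)).filter (fun y => y ≤ m ∨ ¬ (2 ∣ y))).card
      = (m + m / 2).toNat := by
  have hbad : (Finset.Ioo (0:ℤ) (2 * m + 1)).filter (fun y => ¬ (y ≤ m ∨ ¬ (2 ∣ y)))
      = (Finset.Ioc (m / 2) m).image (fun z => 2 * z) := by
    ext y
    simp only [Finset.mem_filter, Finset.mem_Ioo, Finset.mem_image, Finset.mem_Ioc]
    constructor
    · rintro ⟨⟨h0, h1⟩, h2⟩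
      push_neg at h2
      exact ⟨y / 2, ⟨by omega, by omega⟩, by omega⟩
    · rintro ⟨z, ⟨hz1, hz2⟩, rfl⟩
      omega
  have hcard := Finset.card_filter_add_card_filter_not
    (s := Finset.Ioo (0:ℤ) (2 * m + 1)) (fun y => y ≤ m ∨ ¬ (2 ∣ y))
  rw [hbad, Finset.card_image_of_injective _ (fun u v h => by omega),
    Int.card_Ioc, Int.card_Ioo] at hcard
  omega

lemma countA (m : ℤ) (hm : 1 ≤ m) :
    ((Finset.Ioo (0:ℤ) (2 * m + 1)).filter (fun y => ¬ (2 ∣ y) ∨ (4 ∣ y))).card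
      = (m + m / 2).toNat := by
  have hbad : (Finset.Ioo (0:ℤ) (2 * m + 1)).filter (fun y => ¬ (¬ (2 ∣ y) ∨ (4 ∣ y)))
      = (Finset.Ico (0:ℤ) ((m + 1) / 2)).image (fun w => 4 * w + 2) := by
    ext y
    simp only [Finset.mem_filter, Finset.mem_Ioo, Finset.mem_image, Finset.mem_Ico]
    constructor
    · rintro ⟨⟨h0, h1⟩, h2⟩
      push_neg at h2
      exact ⟨(y - 2) / 4, ⟨by omega, by omega⟩, by omega⟩
    · rintro ⟨w, ⟨hw1, hw2⟩, rfl⟩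
      omega
  have hcard := Finset.card_filter_add_card_filter_not
    (s := Finset.Ioo (0:ℤ) (2 * m + 1)) (fun y => ¬ (2 ∣ y) ∨ (4 ∣ y))
  rw [hbad, Finset.card_image_of_injective _ (fun u v h => by omega),
    Int.card_Ico, Int.card_Ioo] at hcard
  omega

/-- For odd `n ≥ 3`: `V(2,n) = (3n−3)/4` if `n ≡ 1 (mod 4)`,
`V(2,n) = (3n−5)/4` if `n ≡ 3 (mod 4)`, and `V((n+1)/2, n) = V(2,n)`. -/
theorem V_two (n : ℤ) (hn : 3 ≤ n) (hodd : Odd n) :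
    (n % 4 = 1 → 4 * (V 2 n : ℤ) = 3 * n - 3) ∧
      (n % 4 = 3 → 4 * (V 2 n : ℤ) = 3 * n - 5) ∧
      V ((n + 1) / 2) n = V 2 n := by
  obtain ⟨m', hm'⟩ := hodd
  set m : ℤ := m' with hmdef
  have hnm : n = 2 * m + 1 := by omega
  have hm : 1 ≤ m := by omega
  -- V 2 n
  have hcop2 : IsCoprime (2:ℤ) n := ⟨-m, 1, by rw [hnm]; ring⟩
  have hV2 : V 2 n = (m + m / 2).toNat := by
    rw [V_eq_card 2 n (by omega) (by omega) hcop2, ← count2 m hm, hnm]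
    refine congrArg Finset.card (Finset.filter_congr ?_)
    intro y hy
    simp only [Finset.mem_Ioo] at hy
    rw [ediv_two m y hm hy.1 hy.2]
    split_ifs with h
    · simp [Int.one_gcd, h]
    · rw [show (1:ℤ) + 1 = 2 by norm_num, gcd_two_iff]
      tauto
  -- V a n, a = (n+1)/2 = m+1
  have ha : (n + 1) / 2 = m + 1 := by omega
  have hcopA : IsCoprime (m + 1 : ℤ) n := ⟨2, -1, by rw [hnm]; ring⟩
  have hVA : V ((n + 1) / 2) n = (m + m / 2).toNat := by
    rw [ha, V_eq_card (m+1) n (by omega) (by omega) hcopA, ← countA m hm, hnm]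
    refine congrArg Finset.card (Finset.filter_congr ?_)
    intro y hy
    simp only [Finset.mem_Ioo] at hy
    rw [ediv_half m y hm (by omega) hy.2]
    rcases Int.even_or_odd y with ⟨q, hq⟩ | ⟨q, hq⟩
    · have hq2 : y / 2 = q := by omega
      rw [hq2]
      have e1 : Int.gcd (q + 1) y = Int.gcd (q + 1) 2 := by
        have : y = -2 + (q + 1) * 2 := by omega
        rw [this, gcd_add_mul_aux]
        have : Int.gcd (q+1) (-2) = Int.gcd (q+1) 2 := by
          unfold Int.gcd; simp
        rw [this]
      rw [e1, Int.gcd_comm, gcd_two_iff]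
      constructor
      · intro h; right; omega
      · rintro (h | h)
        · exact absurd ⟨q, by omega⟩ h
        · omega
    · have hq2 : y / 2 = q := by omega
      rw [hq2]
      have e1 : Int.gcd (q + 1) y = Int.gcd (q + 1) (-1) := by
        have : y = -1 + (q + 1) * 2 := by omega
        rw [this, gcd_add_mul_aux]
      rw [e1]
      simp only [Int.gcd]
      norm_num
      omega
  refine ⟨?_, ?_, by rw [hVA, hV2]⟩
  · intro h4
    rw [hV2]
    have : 0 ≤ m + m / 2 := by omega
    rw [Int.toNat_of_nonneg this]
    omega
  · intro h4
    rw [hV2]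
    have : 0 ≤ m + m / 2 := by omega
    rw [Int.toNat_of_nonneg this]
    omega
end

section
/- Let n ≥ 3 be an odd integer. Then V((n−1)/2, n) = (n+1)/2 and V(n−2, n) = (n+1)/2. -/
lemma inInteriorP_iff (a n : ℤ) (hn : 0 < n) (p : ℤ × ℤ) :
    inInteriorP a n p ↔
      0 < p.2 ∧ p.2 < n ∧ a * p.2 < n * p.1 ∧ n * p.1 < a * p.2 + n := by
  obtain ⟨x, y⟩ := p
  simp only [inInteriorP]
  have hnR : (0:ℝ) < n := by exact_mod_cast hn
  constructor
  · rintro ⟨t₁, t₂, h0, h1, h2, h3, hx, hy⟩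
    have hy' : (0:ℝ) < y := by rw [hy]; positivity
    have hy'' : (y:ℝ) < n := by rw [hy]; nlinarith
    have hx1 : (a:ℝ) * y < n * x := by rw [hx, hy]; nlinarith
    have hx2 : (n:ℝ) * x < a * y + n := by rw [hx, hy]; nlinarith
    exact ⟨by exact_mod_cast hy', by exact_mod_cast hy'',
      by exact_mod_cast hx1, by exact_mod_cast hx2⟩
  · rintro ⟨h1, h2, h3, h4⟩
    have h1' : (0:ℝ) < y := by exact_mod_cast h1
    have h2' : (y:ℝ) < n := by exact_mod_cast h2
    have h3' : (a:ℝ) * y < n * x := by exact_mod_cast h3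
    have h4' : (n:ℝ) * x < a * y + n := by exact_mod_cast h4
    refine ⟨(n * x - a * y) / n, y / n, ?_, ?_, ?_, ?_, ?_, ?_⟩
    · have : (0:ℝ) < n * x - a * y := by linarith
      positivity
    · rw [div_lt_one hnR]; linarith
    · positivity
    · rw [div_lt_one hnR]; linarith
    · field_simp; ring
    · field_simp

/-- uniqueness of the lattice x-coordinate for a given y. -/
lemma x_uniq (n x x' c : ℤ) (hn : 0 < n) (h1 : c < n * x) (h2 : n * x < c + n)
    (h3 : c < n * x') (h4 : n * x' < c + n) : x = x' := by
  have hlt : n * (x - x') < n * 1 := by nlinarith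
  have hgt : n * (-1) < n * (x - x') := by nlinarith
  have e1 : x - x' < 1 := lt_of_mul_lt_mul_left hlt hn.le
  have e2 : (-1 : ℤ) < x - x' := lt_of_mul_lt_mul_left hgt hn.le
  omega

lemma gcd_one_of (x y u v : ℤ) (h : u * x + v * y = 1) : Int.gcd x y = 1 :=
  Int.isCoprime_iff_gcd_eq_one.mp ⟨u, v, h⟩

lemma eq_one_of_gcd_self_mul (x c : ℤ) (hx : 0 < x) (h : Int.gcd x (c * x) = 1) :
    x = 1 := by
  have hd : x ∣ (Int.gcd x (c * x) : ℤ) := Int.dvd_coe_gcd dvd_rfl ⟨c, by ring⟩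
  rw [h] at hd
  have := Int.le_of_dvd one_pos hd
  omega

/-- For odd `n ≥ 3`: `V((n−1)/2, n) = (n+1)/2` and `V(n−2, n) = (n+1)/2`. -/
theorem V_half (n : ℤ) (hn : 3 ≤ n) (hodd : Odd n) :
    2 * (V ((n - 1) / 2) n : ℤ) = n + 1 ∧ 2 * (V (n - 2) n : ℤ) = n + 1 := by
  obtain ⟨m, hm⟩ := hodd
  have hm1 : 1 ≤ m := by omega
  have hn0 : 0 < n := by omega
  constructor
  · -- a = (n-1)/2 = m
    have ha : (n - 1) / 2 = m := by omega
    rw [ha]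
    have hset : {p : ℤ × ℤ | inInteriorP m n p ∧ VisiblePt p} =
        ↑(insert ((1 : ℤ), (2 : ℤ))
          ((Finset.Ico (0:ℤ) m).image fun k => (k + 1, 2 * k + 1))) := by
      ext ⟨x, y⟩
      simp only [Set.mem_setOf_eq, inInteriorP_iff m n hn0, VisiblePt,
        Finset.coe_insert, Set.mem_insert_iff, Finset.coe_image, Set.mem_image,
        Finset.mem_coe, Finset.mem_Ico, Prod.mk.injEq]
      constructor
      · rintro ⟨⟨hy0, hyn, hx1, hx2⟩, hg⟩
        rcases Int.even_or_odd y with ⟨k, hk⟩ | ⟨k, hk⟩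
        · -- y = 2k, x = k, gcd forces k = 1
          have hxk : x = k := by
            refine x_uniq n x k (m * y) hn0 hx1 hx2 ?_ ?_ <;> nlinarith
          left
          have : k = 1 := by
            refine eq_one_of_gcd_self_mul k 2 (by omega) ?_
            rw [hxk, hk] at hg; rw [Int.gcd_comm] at hg ⊢
            convert hg using 2; ring
          omega
        · -- y = 2k+1, x = k+1
          have hxk : x = k + 1 := by
            refine x_uniq n x (k + 1) (m * y) hn0 hx1 hx2 ?_ ?_ <;> nlinarith
          right
          exact ⟨k, ⟨by omega, by omega⟩, by omega, by omega⟩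
      · rintro (⟨hx, hy⟩ | ⟨k, ⟨hk0, hkm⟩, hx, hy⟩)
        · subst hx; subst hy
          refine ⟨⟨by omega, by omega, by nlinarith, by nlinarith⟩, ?_⟩
          exact gcd_one_of 1 2 1 0 (by ring)
        · subst hx; subst hy
          refine ⟨⟨by omega, by omega, by nlinarith, by nlinarith⟩, ?_⟩
          exact gcd_one_of (k + 1) (2 * k + 1) 2 (-1) (by ring)
    rw [V, hset, Set.ncard_coe_finset]
    rw [Finset.card_insert_of_notMem (by
      simp only [Finset.mem_image, Finset.mem_Ico, Prod.mk.injEq, not_exists]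
      rintro k ⟨-, -, h2⟩; omega)]
    rw [Finset.card_image_of_injective _ (fun a b hab => by
      simpa using congrArg Prod.fst hab)]
    rw [Int.card_Ico]
    push_cast [Int.toNat_of_nonneg (by omega : (0:ℤ) ≤ m - 0)]
    omega
  · -- a = n - 2 = 2m - 1
    have hset : {p : ℤ × ℤ | inInteriorP (n - 2) n p ∧ VisiblePt p} =
        ↑(insert ((1 : ℤ), (1 : ℤ))
          ((Finset.Ioc m (2 * m)).image fun y => (y - 1, y))) := by
      ext ⟨x, y⟩
      simp only [Set.mem_setOf_eq, inInteriorP_iff (n - 2) n hn0, VisiblePt,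
        Finset.coe_insert, Set.mem_insert_iff, Finset.coe_image, Set.mem_image,
        Finset.mem_coe, Finset.mem_Ioc, Prod.mk.injEq]
      constructor
      · rintro ⟨⟨hy0, hyn, hx1, hx2⟩, hg⟩
        by_cases hym : y ≤ m
        · -- x = y, gcd forces y = 1
          have hxy : x = y := by
            refine x_uniq n x y ((n - 2) * y) hn0 hx1 hx2 ?_ ?_ <;> nlinarith
          left
          have : y = 1 := by
            refine eq_one_of_gcd_self_mul y 1 (by omega) ?_
            rw [hxy] at hg; convert hg using 2; ring
          omega
        · -- x = y - 1
          have hxy : x = y - 1 := by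
            refine x_uniq n x (y - 1) ((n - 2) * y) hn0 hx1 hx2 ?_ ?_ <;> nlinarith
          right
          exact ⟨y, ⟨by omega, by omega⟩, by omega, rfl⟩
      · rintro (⟨hx, hy⟩ | ⟨z, ⟨hz0, hzm⟩, hx, hy⟩)
        · subst hx; subst hy
          refine ⟨⟨by omega, by omega, by nlinarith, by nlinarith⟩, ?_⟩
          exact gcd_one_of 1 1 1 0 (by ring)
        · subst hx; subst hy
          refine ⟨⟨by omega, by omega, by nlinarith, by nlinarith⟩, ?_⟩
          exact gcd_one_of (z - 1) z (-1) 1 (by ring)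
    rw [V, hset, Set.ncard_coe_finset]
    rw [Finset.card_insert_of_notMem (by
      simp only [Finset.mem_image, Finset.mem_Ioc, Prod.mk.injEq, not_exists]
      rintro y ⟨⟨h1, -⟩, -, h2⟩; omega)]
    rw [Finset.card_image_of_injective _ (fun a b hab => by
      simpa using congrArg Prod.snd hab)]
    rw [Int.card_Ioc]
    push_cast [Int.toNat_of_nonneg (by omega : (0:ℤ) ≤ 2 * m - m)]
    omega
end

section
/- Let a, n be positive integers with 1 ≤ a < n and gcd(a,n) = 1. Then V(a,n) + 1 = Σ_{s=1}^{a} #{k ∈ ℤ : (s−1)·n < a·k ≤ s·n and gcd(s,k) = 1}. (The extra 1 on the left accounts for the vertex (a,n), which is visible but lies on the boundary of P_{a,n}; the s-th summand counts the visible lattice points with first coordinate s among the points (⌈k·a/n⌉, k), k = 1, …, n.) -/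
lemma interior_iff {a n : ℤ} (hn : 0 < n) (x y : ℤ) :
    inInteriorP a n (x, y) ↔ 0 < y ∧ y < n ∧ y * a < x * n ∧ x * n < y * a + n := by
  have hnR : (0:ℝ) < (n:ℝ) := by exact_mod_cast hn
  constructor
  · rintro ⟨t₁, t₂, h1, h2, h3, h4, hx, hy⟩
    simp only at hx hy
    have hy0 : (0:ℝ) < (y:ℝ) := by rw [hy]; positivity
    have hyn : (y:ℝ) < n := by nlinarith
    have hxn : (x:ℝ) * n = t₁ * n + (y:ℝ) * a := by rw [hx, hy]; ring
    have h5 : (y:ℝ) * a < x * n := by nlinarith [mul_pos h1 hnR]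
    have h6 : (x:ℝ) * n < y * a + n := by nlinarith [mul_lt_mul_of_pos_right h2 hnR]
    exact ⟨by exact_mod_cast hy0, by exact_mod_cast hyn,
      by exact_mod_cast h5, by exact_mod_cast h6⟩
  · rintro ⟨h1, h2, h3, h4⟩
    have c1 : (0:ℝ) < (y:ℝ) := by exact_mod_cast h1
    have c2 : ((y:ℝ)) < n := by exact_mod_cast h2
    have c3 : (y:ℝ) * a < x * n := by exact_mod_cast h3
    have c4 : (x:ℝ) * n < y * a + n := by exact_mod_cast h4
    refine ⟨((x:ℝ) * n - y * a) / n, (y:ℝ) / n, ?_, ?_, ?_, ?_, ?_, ?_⟩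
    · exact div_pos (by linarith) hnR
    · rw [div_lt_one hnR]; linarith
    · exact div_pos c1 hnR
    · rw [div_lt_one hnR]; exact c2
    · field_simp; ring
    · field_simp

/-- `V(a,n) + 1 = Σ_{s=1}^{a} #{k : (s−1)·n < a·k ≤ s·n, gcd(s,k) = 1}`. -/
theorem V_add_one_eq_sum (a n : ℤ) (ha : 1 ≤ a) (han : a < n)
    (hgcd : Int.gcd a n = 1) :
    (V a n : ℤ) + 1 =
      ∑ s ∈ Finset.Icc 1 a,
        ({k : ℤ | (s - 1) * n < a * k ∧ a * k ≤ s * n ∧ Int.gcd s k = 1}.ncard : ℤ) := by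
  have hn : (0:ℤ) < n := by linarith
  classical
  set F : Finset (ℤ × ℤ) :=
    (Finset.Icc 1 a ×ˢ Finset.Icc 1 n).filter
      (fun p => (p.1 - 1) * n < a * p.2 ∧ a * p.2 < p.1 * n ∧ Int.gcd p.1 p.2 = 1) with hF
  set G : Finset (ℤ × ℤ) :=
    (Finset.Icc 1 a ×ˢ Finset.Icc 1 n).filter
      (fun p => (p.1 - 1) * n < a * p.2 ∧ a * p.2 ≤ p.1 * n ∧ Int.gcd p.1 p.2 = 1) with hG
  -- Step 1 : V a n = F.card
  have hV : V a n = F.card := by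
    rw [V]
    have hSF : {p : ℤ × ℤ | inInteriorP a n p ∧ VisiblePt p} = (F : Set (ℤ × ℤ)) := by
      ext ⟨x, y⟩
      simp only [Set.mem_setOf_eq, Finset.coe_filter, Finset.mem_coe, hF,
        Finset.mem_product, Finset.mem_Icc, VisiblePt, interior_iff hn]
      constructor
      · rintro ⟨⟨h1, h2, h3, h4⟩, h5⟩
        refine ⟨⟨⟨?_, ?_⟩, ?_, ?_⟩, ?_, ?_, h5⟩
        · nlinarith
        · nlinarith
        · linarith
        · linarith
        · nlinarith
        · nlinarith
      · rintro ⟨⟨⟨hx1, hx2⟩, hy1, hy2⟩, h3, h4, h5⟩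
        exact ⟨⟨by linarith, by nlinarith, by nlinarith, by nlinarith⟩, h5⟩
    rw [hSF, Set.ncard_coe_finset]
  -- Step 2 : each summand is a finset card
  have hsum : ∀ s ∈ Finset.Icc 1 a,
      ({k : ℤ | (s - 1) * n < a * k ∧ a * k ≤ s * n ∧ Int.gcd s k = 1}.ncard : ℤ)
        = (((Finset.Icc 1 n).filter
            (fun k => (s - 1) * n < a * k ∧ a * k ≤ s * n ∧ Int.gcd s k = 1)).card : ℤ) := by
    intro s hs
    rw [Finset.mem_Icc] at hs
    congr 1
    have : {k : ℤ | (s - 1) * n < a * k ∧ a * k ≤ s * n ∧ Int.gcd s k = 1}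
        = (((Finset.Icc 1 n).filter
            (fun k => (s - 1) * n < a * k ∧ a * k ≤ s * n ∧ Int.gcd s k = 1)) : Set ℤ) := by
      ext k
      simp only [Set.mem_setOf_eq, Finset.coe_filter, Finset.mem_coe, Finset.mem_Icc,
        Set.mem_setOf_eq]
      constructor
      · rintro ⟨h1, h2, h3⟩
        refine ⟨⟨?_, ?_⟩, h1, h2, h3⟩
        · nlinarith [hs.1, hs.2]
        · nlinarith [hs.1, hs.2]
      · rintro ⟨_, h⟩; exact h
    rw [this, Set.ncard_coe_finset]
  rw [Finset.sum_congr rfl hsum]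
  -- Step 3 : the sum of fiber cards equals G.card
  have hGsum : G.card = ∑ s ∈ Finset.Icc 1 a,
      ((Finset.Icc 1 n).filter
        (fun k => (s - 1) * n < a * k ∧ a * k ≤ s * n ∧ Int.gcd s k = 1)).card := by
    rw [Finset.card_eq_sum_card_fiberwise (f := Prod.fst) (t := Finset.Icc 1 a)
      (fun p hp => by
        simp only [hG, Finset.mem_coe, Finset.mem_filter, Finset.mem_product] at hp
        exact hp.1.1)]
    refine Finset.sum_congr rfl fun s hs => ?_
    refine Finset.card_bij (fun p _ => p.2) ?_ ?_ ?_
    · intro p hp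
      simp only [hG, Finset.mem_filter, Finset.mem_product, Finset.mem_Icc] at hp ⊢
      obtain ⟨⟨⟨_, hy⟩, hc⟩, hfst⟩ := hp
      subst hfst
      exact ⟨hy, hc⟩
    · intro p1 hp1 p2 hp2 h
      simp only [Finset.mem_filter] at hp1 hp2
      exact Prod.ext (hp1.2.trans hp2.2.symm) h
    · intro k hk
      simp only [Finset.mem_filter, Finset.mem_Icc] at hk
      rw [Finset.mem_Icc] at hs
      refine ⟨(s, k), ?_, rfl⟩
      simp only [hG, Finset.mem_filter, Finset.mem_product, Finset.mem_Icc]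
      exact ⟨⟨⟨hs, hk.1⟩, hk.2⟩, trivial⟩
  -- Step 4 : G = insert (a, n) F
  have hnotmem : (a, n) ∉ F := by
    simp only [hF, Finset.mem_filter]
    rintro ⟨-, -, h, -⟩
    exact absurd h (lt_irrefl _)
  have hGF : G = insert (a, n) F := by
    ext ⟨x, y⟩
    simp only [hG, hF, Finset.mem_insert, Finset.mem_filter, Finset.mem_product,
      Finset.mem_Icc, Prod.mk.injEq]
    constructor
    · rintro ⟨⟨⟨hx1, hx2⟩, hy1, hy2⟩, h1, h2, h3⟩
      rcases lt_or_eq_of_le h2 with h2' | h2'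
      · exact Or.inr ⟨⟨⟨hx1, hx2⟩, hy1, hy2⟩, h1, h2', h3⟩
      · left
        have hndvd : n ∣ a * y := ⟨x, by linarith [h2']⟩
        have hcop : IsCoprime (n : ℤ) (a : ℤ) := (Int.isCoprime_iff_gcd_eq_one.mpr hgcd).symm
        have hdy : n ∣ y := hcop.dvd_of_dvd_mul_left hndvd
        have hyn : y = n := le_antisymm hy2 (Int.le_of_dvd (by linarith) hdy)
        subst hyn
        have hxa : x = a := by
          have := mul_right_cancel₀ (ne_of_gt hn) h2'
          omega
        exact ⟨hxa, rfl⟩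
    · rintro (⟨hx, hy⟩ | ⟨⟨⟨hx1, hx2⟩, hy1, hy2⟩, h1, h2, h3⟩)
      · subst hx; subst hy
        exact ⟨⟨⟨ha, le_rfl⟩, by linarith, le_rfl⟩, by nlinarith, le_rfl, hgcd⟩
      · exact ⟨⟨⟨hx1, hx2⟩, hy1, hy2⟩, h1, le_of_lt h2, h3⟩
  have hcard : G.card = F.card + 1 := by
    rw [hGF, Finset.card_insert_of_notMem hnotmem]
  rw [hV]
  rw [← Nat.cast_sum]
  rw [← hGsum, hcard]
  push_cast
  ring
end
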